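/- Let B = (I + L)⁻¹ for the Laplacian L of a finite simple graph. Then B is doubly stochastic: all entries of B are nonnegative, and every row sum and every column sum of B equals 1. -/

import Mathlib

open Matrix Finset

attribute [local instance] Matrix.linftyOpNormedRing Matrix.linftyOpNormedAlgebra

theorem dsm_doubly_stochastic
    {n : ℕ} (G : SimpleGraph (Fin n)) [DecidableRel G.Adj]
    (B : Matrix (Fin n) (Fin n) ℝ) (hB : B = (1 + G.lapMatrix ℝ)⁻¹) :
    (∀ i j, 0 ≤ B i j) ∧ (∀ i, ∑ j, B i j = 1) ∧ (∀ j, ∑ i, B i j = 1) := by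
  classical
  set c : ℝ := (n : ℝ) + 1 with hc
  have hc0 : (0:ℝ) < c := by positivity
  set M : Matrix (Fin n) (Fin n) ℝ := 1 + G.lapMatrix ℝ with hM
  set K : Matrix (Fin n) (Fin n) ℝ := 1 - c⁻¹ • M with hK
  -- Laplacian entries
  have hL : ∀ i j, (G.lapMatrix ℝ) i j =
      if i = j then (G.degree i : ℝ) else (if G.Adj i j then -1 else 0) := by
    intro i j
    by_cases h : i = j
    · subst h
      simp [SimpleGraph.lapMatrix, SimpleGraph.degMatrix]
    · simp only [SimpleGraph.lapMatrix, SimpleGraph.degMatrix, Matrix.sub_apply,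
        Matrix.diagonal_apply_ne _ h, SimpleGraph.adjMatrix_apply, if_neg h]
      split_ifs <;> ring
  -- degree bound
  have hdeg : ∀ i, (G.degree i : ℝ) ≤ n := by
    intro i
    have h := Finset.card_le_univ (G.neighborFinset i)
    rw [Fintype.card_fin, G.card_neighborFinset_eq_degree] at h
    exact_mod_cast h
  -- K has nonnegative entries
  have hKnn : ∀ i j, 0 ≤ K i j := by
    intro i j
    by_cases h : i = j
    · subst h
      simp only [hK, Matrix.sub_apply, Matrix.smul_apply, hM, Matrix.add_apply,
        Matrix.one_apply_eq, hL i i, if_true, smul_eq_mul]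
      have h1 : (1 : ℝ) + (G.degree i : ℝ) ≤ c := by
        have := hdeg i; rw [hc]; linarith
      have h3 := mul_le_mul_of_nonneg_left h1 (le_of_lt (inv_pos.mpr hc0))
      rw [inv_mul_cancel₀ (ne_of_gt hc0)] at h3
      linarith
    · simp only [hK, Matrix.sub_apply, Matrix.smul_apply, hM, Matrix.add_apply,
        Matrix.one_apply_ne h, hL i j, if_neg h, smul_eq_mul, zero_add]
      split_ifs with h2
      · have : (0:ℝ) ≤ c⁻¹ := le_of_lt (inv_pos.mpr hc0)
        nlinarith
      · simp
  -- row sums of the Laplacian are zero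
  have hLrow : ∀ i, ∑ j, (G.lapMatrix ℝ) i j = 0 := by
    intro i
    have := congrFun (G.lapMatrix_mulVec_const_eq_zero (R := ℝ)) i
    simpa [Matrix.mulVec, dotProduct] using this
  -- row sums of M are 1
  have hMrow : ∀ i, ∑ j, M i j = 1 := by
    intro i
    rw [hM]
    simp only [Matrix.add_apply, Finset.sum_add_distrib, hLrow i, add_zero]
    simp [Matrix.one_apply]
  -- row sums of K
  have hKrow : ∀ i, ∑ j, K i j = 1 - c⁻¹ := by
    intro i
    rw [hK]
    simp only [Matrix.sub_apply, Matrix.smul_apply, smul_eq_mul, Finset.sum_sub_distrib,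
      ← Finset.mul_sum, hMrow i, mul_one]
    simp [Matrix.one_apply]
  -- norm bound
  have hKnorm : ‖K‖ < 1 := by
    have h1 : (0:ℝ) ≤ 1 - c⁻¹ := by
      have : c⁻¹ ≤ 1 := by
        rw [inv_le_one_iff₀]
        right
        rw [hc]
        have : (0:ℝ) ≤ (n:ℝ) := Nat.cast_nonneg n
        linarith
      linarith
    have hle : ‖K‖ ≤ 1 - c⁻¹ := by
      rw [Matrix.linfty_opNorm_def]
      have : (Finset.univ.sup fun i : Fin n => ∑ j, ‖K i j‖₊) ≤ Real.toNNReal (1 - c⁻¹) := by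
        refine Finset.sup_le fun i _ => ?_
        rw [← NNReal.coe_le_coe]
        push_cast
        rw [Real.coe_toNNReal _ h1]
        refine le_of_eq ?_
        calc ∑ j, ‖K i j‖ = ∑ j, K i j := by
              refine Finset.sum_congr rfl fun j _ => Real.norm_of_nonneg (hKnn i j)
          _ = 1 - c⁻¹ := hKrow i
      calc ((Finset.univ.sup fun i : Fin n => ∑ j, ‖K i j‖₊ : NNReal) : ℝ)
          ≤ (Real.toNNReal (1 - c⁻¹) : ℝ) := by exact_mod_cast this
        _ = 1 - c⁻¹ := Real.coe_toNNReal _ h1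
    have : (0:ℝ) < c⁻¹ := inv_pos.mpr hc0
    linarith
  -- geometric series
  set S : Matrix (Fin n) (Fin n) ℝ := ∑' k : ℕ, K ^ k with hSdef
  have hsum : Summable (fun k : ℕ => K ^ k) := summable_geometric_of_norm_lt_one hKnorm
  have hS : HasSum (fun k : ℕ => K ^ k) S := hsum.hasSum
  have h1 : (1 - K) * S = 1 := mul_neg_geom_series K hKnorm
  have h2 : S * (1 - K) = 1 := geom_series_mul_neg K hKnorm
  have hMK : M = c • (1 - K) := by
    rw [hK]
    rw [sub_sub_cancel, smul_smul, mul_inv_cancel₀ (ne_of_gt hc0), one_smul]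
  have hMN : M * (c⁻¹ • S) = 1 := by
    rw [hMK, Matrix.smul_mul, Matrix.mul_smul, smul_smul, mul_inv_cancel₀ (ne_of_gt hc0),
      one_smul, h1]
  have hNM : (c⁻¹ • S) * M = 1 := by
    rw [hMK, Matrix.mul_smul, Matrix.smul_mul, smul_smul, mul_inv_cancel₀ (ne_of_gt hc0),
      one_smul, h2]
  have hBN : B = c⁻¹ • S := by
    rw [hB]
    exact Matrix.inv_eq_right_inv hMN
  -- powers of K have nonneg entries
  have hpow : ∀ k : ℕ, ∀ i j, 0 ≤ (K ^ k) i j := by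
    intro k
    induction k with
    | zero => intro i j; rw [pow_zero]; rw [Matrix.one_apply]; split_ifs <;> norm_num
    | succ k ih =>
      intro i j
      rw [pow_succ, Matrix.mul_apply]
      exact Finset.sum_nonneg fun l _ => mul_nonneg (ih i l) (hKnn l j)
  -- entries of S are nonneg
  have hSnn : ∀ i j, 0 ≤ S i j := by
    intro i j
    have e : Matrix (Fin n) (Fin n) ℝ →L[ℝ] ℝ :=
      (Matrix.entryLinearMap ℝ ℝ i j).toContinuousLinearMap
    have hS' : HasSum (fun k : ℕ => (K ^ k) i j)
        ((Matrix.entryLinearMap ℝ ℝ i j).toContinuousLinearMap S) :=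
      (Matrix.entryLinearMap ℝ ℝ i j).toContinuousLinearMap.hasSum hS
    have heq : (Matrix.entryLinearMap ℝ ℝ i j).toContinuousLinearMap S = S i j := rfl
    rw [heq] at hS'
    rw [← hS'.tsum_eq]
    exact tsum_nonneg fun k => hpow k i j
  have hBnn : ∀ i j, 0 ≤ B i j := by
    intro i j
    rw [hBN]
    exact mul_nonneg (le_of_lt (inv_pos.mpr hc0)) (hSnn i j)
  -- row sums
  have hBM : B * M = 1 := by rw [hBN]; exact hNM
  have hMB : M * B = 1 := by rw [hBN]; exact hMN
  have hrow : ∀ i, ∑ j, B i j = 1 := by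
    intro i
    have hMv : M *ᵥ (fun _ => (1:ℝ)) = fun _ => 1 := by
      rw [hM, Matrix.add_mulVec, Matrix.one_mulVec, G.lapMatrix_mulVec_const_eq_zero]
      simp
    have : B *ᵥ (fun _ => (1:ℝ)) = fun _ => 1 := by
      calc B *ᵥ (fun _ => (1:ℝ)) = B *ᵥ (M *ᵥ fun _ => 1) := by rw [hMv]
        _ = (B * M) *ᵥ (fun _ => 1) := Matrix.mulVec_mulVec _ _ _
        _ = fun _ => 1 := by rw [hBM, Matrix.one_mulVec]
    have := congrFun this i
    simpa [Matrix.mulVec, dotProduct] using this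
  refine ⟨hBnn, hrow, ?_⟩
  -- column sums
  intro j
  have hMsymm : Mᵀ = M := by
    rw [hM]
    rw [Matrix.transpose_add, Matrix.transpose_one, (G.isSymm_lapMatrix (R := ℝ)).eq]
  have hvM : (fun _ => (1:ℝ)) ᵥ* M = fun _ => 1 := by
    rw [← Matrix.mulVec_transpose, hMsymm]
    rw [hM, Matrix.add_mulVec, Matrix.one_mulVec, G.lapMatrix_mulVec_const_eq_zero]
    simp
  have : (fun _ => (1:ℝ)) ᵥ* B = fun _ => 1 := by
    calc (fun _ => (1:ℝ)) ᵥ* B = ((fun _ => (1:ℝ)) ᵥ* M) ᵥ* B := by rw [hvM]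
      _ = (fun _ => (1:ℝ)) ᵥ* (M * B) := by rw [Matrix.vecMul_vecMul]
      _ = fun _ => 1 := by rw [hMB, Matrix.vecMul_one]
  have := congrFun this j
  simpa [Matrix.vecMul, dotProduct] using this
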